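/- Let m, n be natural numbers. The simple graph whose vertices are the staircases from (0,0) to (m,n), with two distinct staircases adjacent if and only if their sets of visited lattice points share exactly m+n points, is 2-colorable (bipartite); a proper 2-coloring is given by the parity of the sum Σ_{k=1}^m s(F)_k of the coordinates of the associated vector s(F). -/

import Mathlib

/-- A staircase from `(0,0)` to `(m,n)`. -/
def IsStaircase (m n : ℕ) (p : Fin (m + n + 1) → ℕ × ℕ) : Prop :=
  p 0 = (0, 0) ∧ p (Fin.last (m + n)) = (m, n) ∧
    ∀ t : Fin (m + n), p t.succ = p t.castSucc + (1, 0) ∨ p t.succ = p t.castSucc + (0, 1)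

/-- The set of indices `t` at which the staircase `p` makes a `(1,0)`-step. -/
def rightSteps (m n : ℕ) (p : Fin (m + n + 1) → ℕ × ℕ) : Finset (Fin (m + n)) :=
  Finset.univ.filter fun t => (p t.succ).1 = (p t.castSucc).1 + 1

/-- The vector `s(F)` associated with a staircase: its (0-indexed) `k`-th entry is the
`k`-th smallest element `f_k` of the set `F` of `(1,0)`-step positions, minus `k`. -/
def sVec (m n : ℕ) (p : Fin (m + n + 1) → ℕ × ℕ) : Fin m → ℕ :=
  fun k => (((rightSteps m n p).sort (· ≤ ·)).map Fin.val).getD (k : ℕ) 0 - (k : ℕ)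

namespace StairAux

variable {m n : ℕ} {p : Fin (m + n + 1) → ℕ × ℕ}

lemma mem_rightSteps {t : Fin (m+n)} :
    t ∈ rightSteps m n p ↔ (p t.succ).1 = (p t.castSucc).1 + 1 := by
  simp [rightSteps]

lemma level (h : IsStaircase m n p) (t : Fin (m+n+1)) :
    (p t).1 + (p t).2 = (t : ℕ) := by
  induction t using Fin.induction with
  | zero => simp [h.1]
  | succ i ih =>
      have hic : ((i.castSucc : Fin (m+n+1)) : ℕ) = (i : ℕ) := rfl
      have his : ((i.succ : Fin (m+n+1)) : ℕ) = (i : ℕ) + 1 := rfl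
      rcases h.2.2 i with h' | h' <;>
        simp only [h', Prod.fst_add, Prod.snd_add, his, hic] at * <;> simp <;> omega

lemma inj (h : IsStaircase m n p) : Function.Injective p := by
  intro s t hst
  have h1 := level h s
  have h2 := level h t
  rw [hst] at h1
  have : (s:ℕ) = (t:ℕ) := by omega
  exact Fin.ext this

lemma first_eq_card (h : IsStaircase m n p) (j : Fin (m+n+1)) :
    (p j).1 = ((rightSteps m n p).filter fun t : Fin (m+n) => (t : ℕ) < (j : ℕ)).card := by
  induction j using Fin.induction with
  | zero => simp [h.1]
  | succ i ih =>
      have hsplit : ((rightSteps m n p).filter fun t : Fin (m+n) => (t : ℕ) < ((i.succ : Fin (m+n+1)) : ℕ)).card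
          = ((rightSteps m n p).filter fun t : Fin (m+n) => (t : ℕ) < (i : ℕ)).card
            + (if i ∈ rightSteps m n p then 1 else 0) := by
        have : (fun t : Fin (m+n) => (t : ℕ) < ((i.succ : Fin (m+n+1)) : ℕ))
            = fun t : Fin (m+n) => ((t : ℕ) < (i : ℕ) ∨ t = i) := by
          funext t
          simp [Fin.val_succ, Fin.ext_iff]
          omega
        rw [Finset.filter_congr (fun x _ => iff_of_eq (congrFun this x)), Finset.filter_or, Finset.filter_eq']
        rw [Finset.card_union_of_disjoint]
        · split <;> simp
        · simp only [Finset.disjoint_left, Finset.mem_filter]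
          rintro a ⟨_, ha⟩
          split
          · simp_all [Fin.ext_iff]; omega
          · simp
      simp only [Fin.coe_castSucc] at ih
      rw [hsplit, ← ih]
      rcases h.2.2 i with h' | h'
      · have hm : i ∈ rightSteps m n p := by simp [mem_rightSteps, h']
        simp [hm, h']
      · have hm : i ∉ rightSteps m n p := by simp [mem_rightSteps, h']
        simp [hm, h']

lemma card_rightSteps (h : IsStaircase m n p) : (rightSteps m n p).card = m := by
  have := first_eq_card h (Fin.last (m+n))
  rw [h.2.1] at this
  simpa [Fin.is_lt] using this.symm

lemma sum_sVec (h : IsStaircase m n p) :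
    (∑ k : Fin m, sVec m n p k) + (∑ k : Fin m, (k : ℕ))
      = ∑ t ∈ rightSteps m n p, (t : ℕ) := by
  set l : List ℕ := ((rightSteps m n p).sort (· ≤ ·)).map Fin.val with hl
  have hlen : l.length = m := by
    simp [hl, Finset.length_sort, card_rightSteps h]
  have hsorted : l.Pairwise (· < ·) := by
    apply List.Pairwise.map
    · exact fun a b hab => hab
    · exact (Finset.sortedLT_sort _).pairwise
  have hge : ∀ k : ℕ, (hk : k < l.length) → k ≤ l[k] := by
    intro k
    induction k with
    | zero => omega
    | succ k ih =>
        intro hk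
        have h1 : l[k] < l[k+1] :=
          List.pairwise_iff_getElem.1 hsorted k (k+1) (by omega) hk (by omega)
        have := ih (by omega)
        omega
  have hget : ∀ k : Fin m, sVec m n p k = l.getD (k : ℕ) 0 - (k : ℕ) := by
    intro k
    rw [sVec, ← hl]
  have hrange : ∀ L : List ℕ, ∑ i ∈ Finset.range L.length, L.getD i 0 = L.sum := by
    intro L
    induction L with
    | nil => simp
    | cons a L ih =>
        rw [List.length_cons, Finset.sum_range_succ']
        simp only [List.getD_cons_succ, List.getD_cons_zero, List.sum_cons]
        omega
  calc (∑ k : Fin m, sVec m n p k) + (∑ k : Fin m, (k : ℕ))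
      = ∑ k : Fin m, (sVec m n p k + (k : ℕ)) := (Finset.sum_add_distrib).symm
    _ = ∑ k : Fin m, l.getD (k : ℕ) 0 := by
        apply Finset.sum_congr rfl
        intro k _
        rw [hget k, List.getD_eq_getElem l 0 (by omega)]
        exact Nat.sub_add_cancel (by simpa [List.getD_eq_getElem l 0 (show (k:ℕ) < l.length by omega)] using hge k (by omega))
    _ = ∑ i ∈ Finset.range m, l.getD i 0 := Fin.sum_univ_eq_sum_range (fun i => l.getD i 0) m
    _ = l.sum := by rw [← hlen]; exact hrange l
    _ = ∑ t ∈ rightSteps m n p, (t : ℕ) := by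
        rw [Finset.sum_eq_multiset_sum, ← Finset.sort_eq (rightSteps m n p) (· ≤ ·), hl,
          Multiset.map_coe, Multiset.sum_coe]

lemma sum_shift {F G : Finset (Fin (m+n))} {u v : Fin (m+n)}
    (huv : (u:ℕ) + 1 = (v:ℕ))
    (hu : u ∈ F) (hv : v ∉ F) (hu' : u ∉ G) (hv' : v ∈ G)
    (hrest : ∀ w, w ≠ u → w ≠ v → (w ∈ F ↔ w ∈ G)) :
    (∑ t ∈ F, (t:ℕ)) + 1 = ∑ t ∈ G, (t:ℕ) := by
  classical
  have huvne : u ≠ v := by intro h; rw [h] at huv; omega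
  have hF : F = insert u (F \ {u, v}) := by
    ext w
    rcases eq_or_ne w u with rfl | hwu
    · simp [hu]
    rcases eq_or_ne w v with rfl | hwv
    · simp [hv, hwu]
    · simp [hwu, hwv]
  have hG : G = insert v (F \ {u, v}) := by
    ext w
    rcases eq_or_ne w u with rfl | hwu
    · simp [hu', huvne]
    rcases eq_or_ne w v with rfl | hwv
    · simp [hv']
    · simp [hwu, hwv, hrest w hwu hwv]
  have hun : u ∉ F \ {u, v} := by simp
  have hvn : v ∉ F \ {u, v} := by simp
  rw [hF, hG, Finset.sum_insert hun, Finset.sum_insert hvn]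
  omega

variable {P Q : Fin (m + n + 1) → ℕ × ℕ}

lemma key (hP : IsStaircase m n P) (hQ : IsStaircase m n Q) (hne : P ≠ Q)
    (hcard : ((Finset.univ.image P) ∩ (Finset.univ.image Q)).card = m + n) :
    (∑ t ∈ rightSteps m n P, (t:ℕ)) + 1 = ∑ t ∈ rightSteps m n Q, (t:ℕ) ∨
    (∑ t ∈ rightSteps m n Q, (t:ℕ)) + 1 = ∑ t ∈ rightSteps m n P, (t:ℕ) := by
  classical
  have him : (Finset.univ.image P) ∩ (Finset.univ.image Q)
      = (Finset.univ.filter fun t => P t = Q t).image P := by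
    ext x
    simp only [Finset.mem_inter, Finset.mem_image, Finset.mem_filter, Finset.mem_univ, true_and]
    constructor
    · rintro ⟨⟨t, rfl⟩, ⟨t', ht'⟩⟩
      have h1 := level hP t
      have h2 := level hQ t'
      rw [ht'] at h2
      have htt : t' = t := Fin.ext (by omega)
      rw [htt] at ht'
      exact ⟨t, ht'.symm, rfl⟩
    · rintro ⟨t, h1, rfl⟩
      exact ⟨⟨t, rfl⟩, ⟨t, h1.symm⟩⟩
  have hfc : (Finset.univ.filter fun t => P t = Q t).card = m + n := by
    rw [him, Finset.card_image_of_injective _ (inj hP)] at hcard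
    exact hcard
  have hone : (Finset.univ.filter fun t => ¬ P t = Q t).card = 1 := by
    have := Finset.card_filter_add_card_filter_not
      (s := (Finset.univ : Finset (Fin (m+n+1)))) (p := fun t => P t = Q t)
    simp only [Finset.card_univ, Fintype.card_fin] at this
    omega
  obtain ⟨t₀, ht₀⟩ := Finset.card_eq_one.1 hone
  have hmemiff : ∀ s : Fin (m+n+1), P s ≠ Q s ↔ s = t₀ := by
    intro s
    constructor
    · intro hs
      have : s ∈ Finset.univ.filter fun t => ¬ P t = Q t := by simp [hs]
      rw [ht₀] at this; simpa using this
    · intro hs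
      rw [hs]
      have : t₀ ∈ Finset.univ.filter fun t => ¬ P t = Q t := by rw [ht₀]; simp
      simpa using this
  have hdis : P t₀ ≠ Q t₀ := (hmemiff t₀).2 rfl
  have hagree : ∀ s : Fin (m+n+1), (s:ℕ) ≠ (t₀:ℕ) → P s = Q s := by
    intro s hs
    by_contra hc
    exact hs (congrArg Fin.val ((hmemiff s).1 hc))
  have hne0 : (t₀ : ℕ) ≠ 0 := by
    intro h0
    exact hdis (by rw [show t₀ = 0 from Fin.ext h0, hP.1, hQ.1])
  have hnel : (t₀ : ℕ) ≠ m + n := by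
    intro h0
    exact hdis (by rw [show t₀ = Fin.last (m+n) from Fin.ext h0, hP.2.1, hQ.2.1])
  have hlt : (t₀ : ℕ) < m + n + 1 := t₀.isLt
  set u : Fin (m+n) := ⟨(t₀:ℕ) - 1, by omega⟩ with hu_def
  set v : Fin (m+n) := ⟨(t₀:ℕ), by omega⟩ with hv_def
  have huv : (u:ℕ) + 1 = (v:ℕ) := by simp [hu_def, hv_def] <;> omega
  have e1 : (u.succ : Fin (m+n+1)) = t₀ := Fin.ext (by simp [Fin.val_succ, hu_def] <;> omega)
  have e2 : (v.castSucc : Fin (m+n+1)) = u.succ := Fin.ext (by simp [hu_def, hv_def] <;> omega)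
  have hA : P u.castSucc = Q u.castSucc := by
    apply hagree
    simp [hu_def] <;> omega
  have hB : P v.succ = Q v.succ := by
    apply hagree
    simp [hv_def, Fin.val_succ] <;> omega
  have hD : P u.succ ≠ Q u.succ := by rw [e1]; exact hdis
  have hrest : ∀ w : Fin (m+n), w ≠ u → w ≠ v →
      (w ∈ rightSteps m n P ↔ w ∈ rightSteps m n Q) := by
    intro w hwu hwv
    have hc : P w.castSucc = Q w.castSucc := by
      apply hagree
      simp only [Fin.coe_castSucc]
      intro hh
      exact hwv (Fin.ext (by simp [hv_def, ← hh]))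
    have hs : P w.succ = Q w.succ := by
      apply hagree
      simp only [Fin.val_succ]
      intro hh
      exact hwu (Fin.ext (by simp [hu_def] <;> omega))
    rw [mem_rightSteps, mem_rightSteps, hc, hs]
  have h1 := hP.2.2 u
  have h2 := hP.2.2 v
  have h3 := hQ.2.2 u
  have h4 := hQ.2.2 v
  rw [e2] at h2 h4
  have memP_u : ∀ s : ℕ × ℕ, P u.succ = P u.castSucc + (1, 0) →
      u ∈ rightSteps m n P := by
    intro _ hh
    rw [mem_rightSteps, hh]; simp
  rcases h1 with h1 | h1 <;> rcases h3 with h3 | h3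
  · exact absurd (h1.trans (by rw [hA, ← h3])) hD
  · -- P right at u, Q up at u
    rcases h2 with h2 | h2
    · -- P right at v too: contradiction
      exfalso
      rcases h4 with h4 | h4 <;>
      · rw [h2, h4, h1, h3, hA] at hB
        simp [Prod.ext_iff] at hB <;> omega
    rcases h4 with h4 | h4
    · -- the good case: P = RU, Q = UR
      left
      apply sum_shift huv
      · rw [mem_rightSteps, h1]; simp
      · rw [mem_rightSteps, e2, h2]; simp
      · rw [mem_rightSteps, h3]; simp
      · rw [mem_rightSteps, e2, h4]; simp
      · exact hrest
    · exfalso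
      rw [h2, h4, h1, h3, hA] at hB
      simp [Prod.ext_iff] at hB <;> omega
  · -- P up at u, Q right at u
    rcases h2 with h2 | h2
    · rcases h4 with h4 | h4
      · exfalso
        rw [h2, h4, h1, h3, hA] at hB
        simp [Prod.ext_iff] at hB <;> omega
      · -- good case mirrored: P = UR, Q = RU
        right
        apply sum_shift huv
        · rw [mem_rightSteps, h3]; simp
        · rw [mem_rightSteps, e2, h4]; simp
        · rw [mem_rightSteps, h1]; simp
        · rw [mem_rightSteps, e2, h2]; simp
        · exact fun w hwu hwv => (hrest w hwu hwv).symm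
    · exfalso
      rcases h4 with h4 | h4 <;>
      · rw [h2, h4, h1, h3, hA] at hB
        simp [Prod.ext_iff] at hB <;> omega
  · exact absurd (h1.trans (by rw [hA, ← h3])) hD

end StairAux

/-- The dual graph of the staircase triangulation of `Δ_m × Δ_n`: vertices are the
staircases from `(0,0)` to `(m,n)`, two distinct staircases being adjacent iff their
sets of visited lattice points share exactly `m+n` points. -/
def staircaseDualGraph (m n : ℕ) :
    SimpleGraph {p : Fin (m + n + 1) → ℕ × ℕ // IsStaircase m n p} :=
  SimpleGraph.fromRel fun P Q =>
    ((Finset.univ.image P.1) ∩ (Finset.univ.image Q.1)).card = m + n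

/-- The dual graph of the staircase triangulation of `Δ_m × Δ_n` is bipartite
(2-colorable); a proper 2-coloring is given by the parity of `∑_k s(F)_k`. -/
theorem staircaseDualGraph_bipartite (m n : ℕ) :
    (∀ P Q : {p : Fin (m + n + 1) → ℕ × ℕ // IsStaircase m n p},
      (staircaseDualGraph m n).Adj P Q →
        (∑ k : Fin m, sVec m n P.1 k) % 2 ≠ (∑ k : Fin m, sVec m n Q.1 k) % 2) ∧
    (staircaseDualGraph m n).Colorable 2 := by
  have main : ∀ P Q : {p : Fin (m + n + 1) → ℕ × ℕ // IsStaircase m n p},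
      (staircaseDualGraph m n).Adj P Q →
        (∑ k : Fin m, sVec m n P.1 k) % 2 ≠ (∑ k : Fin m, sVec m n Q.1 k) % 2 := by
    intro P Q hadj
    rw [staircaseDualGraph, SimpleGraph.fromRel_adj] at hadj
    obtain ⟨hne, hr⟩ := hadj
    have hcard : ((Finset.univ.image P.1) ∩ (Finset.univ.image Q.1)).card = m + n := by
      rcases hr with h | h
      · exact h
      · rw [Finset.inter_comm]; exact h
    have hne' : P.1 ≠ Q.1 := fun h => hne (Subtype.ext h)
    have hk := StairAux.key P.2 Q.2 hne' hcard
    have hsP := StairAux.sum_sVec P.2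
    have hsQ := StairAux.sum_sVec Q.2
    omega
  refine ⟨main, ?_⟩
  exact ⟨SimpleGraph.Coloring.mk
    (fun P => ⟨(∑ k : Fin m, sVec m n P.1 k) % 2, by omega⟩)
    (fun {a b} hab h => main a b hab (congrArg Fin.val h))⟩
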